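/- arXiv:1201.3174 — 3 statements merged into one kernel-verified Lean document; each statement's English description precedes it below -/
import Mathlib

section
/- In a right-angled Coxeter group C(Σ,I) defined by a finite simple graph (Σ,I) with relations a²=1 for a∈Σ and ab=ba for (a,b)∈I, if u and v are geodesic words over Σ representing the same group element, then u and v contain exactly the same set of letters. -/
/-- The defining relators of the right-angled Coxeter group `C(Σ, I)`:
`a² = 1` for every generator `a`, and `ab = ba` for every pair `(a,b) ∈ I`. -/
def racRels {S : Type*} (I : S → S → Prop) : Set (FreeGroup S) :=
  {r | ∃ a : S, r = FreeGroup.of a * FreeGroup.of a} ∪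
  {r | ∃ a b : S, I a b ∧
        r = FreeGroup.of a * FreeGroup.of b * (FreeGroup.of a)⁻¹ * (FreeGroup.of b)⁻¹}

/-- Evaluation of a word over `Σ` in the right-angled Coxeter group `C(Σ, I)`. -/
def racEval {S : Type*} (I : S → S → Prop) (w : List S) : PresentedGroup (racRels I) :=
  (w.map (fun a => PresentedGroup.of (rels := racRels I) a)).prod

namespace RacAux

variable {S : Type*} (I : S → S → Prop)

lemma mk_rel_eq_one {r : FreeGroup S} (hr : r ∈ racRels I) :
    (QuotientGroup.mk r : PresentedGroup (racRels I)) = 1 := by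
  rw [QuotientGroup.eq_one_iff]
  exact Subgroup.subset_normalClosure hr

lemma of_sq (a : S) :
    PresentedGroup.of (rels := racRels I) a * PresentedGroup.of a = 1 := by
  have : (QuotientGroup.mk (FreeGroup.of a * FreeGroup.of a) :
      PresentedGroup (racRels I)) = 1 :=
    mk_rel_eq_one I (Or.inl ⟨a, rfl⟩)
  exact this

lemma of_comm {a b : S} (h : I a b) :
    PresentedGroup.of (rels := racRels I) a * PresentedGroup.of b *
      (PresentedGroup.of (rels := racRels I) a)⁻¹ *
      (PresentedGroup.of (rels := racRels I) b)⁻¹ = 1 := by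
  have : (QuotientGroup.mk (FreeGroup.of a * FreeGroup.of b *
      (FreeGroup.of a)⁻¹ * (FreeGroup.of b)⁻¹) : PresentedGroup (racRels I)) = 1 :=
    mk_rel_eq_one I (Or.inr ⟨a, b, h, rfl⟩)
  exact this

variable [DecidableEq S] (T : Finset S)

/-- The letters retained / killed. -/
noncomputable def retrFun : S → PresentedGroup (racRels I) :=
  fun a => if a ∈ T then PresentedGroup.of a else 1

lemma retr_rels : ∀ r ∈ racRels I, FreeGroup.lift (retrFun I T) r = 1 := by
  rintro r (⟨a, rfl⟩ | ⟨a, b, hab, rfl⟩)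
  · simp only [map_mul, FreeGroup.lift_apply_of, retrFun]
    by_cases ha : a ∈ T
    · simp [ha, of_sq I a]
    · simp [ha]
  · simp only [map_mul, map_inv, FreeGroup.lift_apply_of, retrFun]
    by_cases ha : a ∈ T <;> by_cases hb : b ∈ T
    · simp only [ha, hb, if_pos]
      exact of_comm I hab
    all_goals simp [ha, hb]

/-- The retraction endomorphism killing the letters outside `T`. -/
noncomputable def retr : PresentedGroup (racRels I) →* PresentedGroup (racRels I) :=
  PresentedGroup.toGroup (retr_rels I T)

lemma retr_eval (w : List S) :
    retr I T (racEval I w) = racEval I (w.filter (· ∈ T)) := by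
  induction w with
  | nil => simp [racEval]
  | cons a w ih =>
    have hcons : racEval I (a :: w) = PresentedGroup.of a * racEval I w := by
      simp [racEval]
    rw [hcons, map_mul, ih]
    have hof : retr I T (PresentedGroup.of a) = retrFun I T a :=
      PresentedGroup.toGroup.of (retr_rels I T)
    by_cases ha : a ∈ T
    · have : (a :: w).filter (· ∈ T) = a :: w.filter (· ∈ T) := by
        simp [List.filter_cons, ha]
      rw [this, hof]
      simp [racEval, retrFun, ha]
    · have : (a :: w).filter (· ∈ T) = w.filter (· ∈ T) := by
        simp [List.filter_cons, ha]
      rw [this, hof]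
      simp [retrFun, ha]

/-- Core lemma: if `u` is geodesic and `u, v` represent the same element,
then every letter of `u` occurs in `v`. -/
lemma mem_of_geodesic (u v : List S)
    (hu : ∀ w : List S, racEval I w = racEval I u → u.length ≤ w.length)
    (huv : racEval I u = racEval I v) :
    ∀ a ∈ u, a ∈ v.toFinset := by
  set T := v.toFinset with hT
  have hvfix : v.filter (· ∈ T) = v := by
    rw [List.filter_eq_self]
    intro a ha
    simpa [hT] using List.mem_toFinset.mpr ha
  have h1 : racEval I (u.filter (· ∈ T)) = racEval I u := by
    have := retr_eval I T u
    rw [huv, retr_eval I T v, hvfix, ← huv] at this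
    exact this.symm
  have h2 : u.length ≤ (u.filter (· ∈ T)).length := hu _ h1
  have h3 : (u.filter (· ∈ T)).length = u.length :=
    le_antisymm (List.length_filter_le _ _) h2
  have hfe : u.filter (· ∈ T) = u :=
    (List.filter_sublist (l := u)).eq_of_length h3
  intro a ha
  have := (List.filter_eq_self.mp hfe) a ha
  simpa using this

end RacAux

/-- In a right-angled Coxeter group `C(Σ, I)` (with `(Σ, I)` a finite simple graph,
i.e. `I` irreflexive and symmetric), two geodesic words representing the same group
element contain exactly the same set of letters. -/
theorem racGeodesic_alphabet_eq {S : Type*} [Fintype S] [DecidableEq S]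
    (I : S → S → Prop) (hirr : ∀ a, ¬ I a a) (hsym : ∀ a b, I a b → I b a)
    (u v : List S)
    (hu : ∀ w : List S, racEval I w = racEval I u → u.length ≤ w.length)
    (hv : ∀ w : List S, racEval I w = racEval I v → v.length ≤ w.length)
    (huv : racEval I u = racEval I v) :
    u.toFinset = v.toFinset := by
  ext a
  simp only [List.mem_toFinset]
  constructor
  · intro ha
    exact List.mem_toFinset.mp (RacAux.mem_of_geodesic I u v hu huv a ha)
  · intro ha
    exact List.mem_toFinset.mp (RacAux.mem_of_geodesic I v u hv huv.symm a ha)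
end

section
/- Let G be an even Coxeter group, a∈Σ a generator, and u,w geodesic words with wa = u in G. Then there exists ε∈{1,−1} with |u| = |w|+ε and |u|_a = |w|_a + ε, and |u|_b = |w|_b for all letters b ≠ a. -/
/-- The defining relators of the Coxeter group with Coxeter matrix `M`. -/
def coxRels {S : Type*} (M : S → S → ℕ) : Set (FreeGroup S) :=
  {r | ∃ i j : S, r = (FreeGroup.of i * FreeGroup.of j) ^ (M i j)}

/-- Evaluation of a word over the generating set `Σ` in the Coxeter group of `M`. -/
def coxEval {S : Type*} (M : S → S → ℕ) (w : List S) : PresentedGroup (coxRels M) :=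
  (w.map (fun a => PresentedGroup.of (rels := coxRels M) a)).prod

namespace EvenCoxAux

open List CoxeterSystem

variable {B : Type*} [DecidableEq B] {W : Type*} [Group W] [DecidableEq W] {M : CoxeterMatrix B}
  (cs : CoxeterSystem M W)

lemma conj_eq_iff (g t y : W) : g * t * g⁻¹ = y ↔ t = g⁻¹ * y * g := by
  constructor
  · intro h; rw [← h]; group
  · intro h; rw [h]; group

lemma simple_conj_eq_iff (j : B) (x y : W) :
    cs.simple j * x * cs.simple j = y ↔ x = cs.simple j * y * cs.simple j := by
  have h := conj_eq_iff (cs.simple j) x y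
  rw [cs.inv_simple] at h
  exact h

lemma conj_pow_simple (i j : B) (k : ℕ) :
    ((cs.simple i * cs.simple j) ^ k)⁻¹ * cs.simple j * (cs.simple i * cs.simple j) ^ k
      = cs.simple j * (cs.simple i * cs.simple j) ^ (2 * k) := by
  set q := cs.simple i * cs.simple j with hq
  have base : cs.simple j * q * cs.simple j = q⁻¹ := by
    rw [hq]
    simp [mul_assoc, cs.simple_mul_simple_self, mul_inv_rev, cs.inv_simple]
  have hconj : ∀ k : ℕ, cs.simple j * q ^ k * cs.simple j = (q⁻¹) ^ k := by
    intro k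
    induction k with
    | zero => simp [cs.simple_mul_simple_self]
    | succ k ih =>
      calc cs.simple j * q ^ (k + 1) * cs.simple j
          = (cs.simple j * q ^ k * cs.simple j) * (cs.simple j * q * cs.simple j) := by
            rw [pow_succ]
            simp [mul_assoc, cs.simple_mul_simple_cancel_left]
        _ = (q⁻¹) ^ k * q⁻¹ := by rw [ih, base]
        _ = (q⁻¹) ^ (k + 1) := by rw [pow_succ]
  have h1 : (q ^ k)⁻¹ * cs.simple j = cs.simple j * q ^ k := by
    calc (q ^ k)⁻¹ * cs.simple j = (q⁻¹) ^ k * cs.simple j := by rw [inv_pow]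
      _ = (cs.simple j * q ^ k * cs.simple j) * cs.simple j := by rw [hconj]
      _ = cs.simple j * q ^ k := by
          simp [mul_assoc, cs.simple_mul_simple_self]
  rw [mul_assoc, ← mul_assoc, h1, mul_assoc, ← pow_add, two_mul]

lemma conj_pow_simple' (i j : B) (k : ℕ) :
    ((cs.simple i * cs.simple j) ^ k)⁻¹ * (cs.simple j * cs.simple i * cs.simple j)
        * (cs.simple i * cs.simple j) ^ k
      = cs.simple j * (cs.simple i * cs.simple j) ^ (2 * k + 1) := by
  set q := cs.simple i * cs.simple j with hq
  have h0 : cs.simple j * cs.simple i * cs.simple j = q⁻¹ * cs.simple j := by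
    rw [hq, mul_inv_rev, cs.inv_simple, cs.inv_simple, mul_assoc]
  have key := conj_pow_simple cs i j (k + 1)
  rw [← hq] at key
  have h2 : (q ^ k)⁻¹ * (q⁻¹ * cs.simple j) * q ^ k
      = ((q ^ (k+1))⁻¹ * cs.simple j * q ^ (k+1)) * q⁻¹ := by
    rw [pow_succ]
    group
  rw [h0, h2, key]
  have h3 : 2 * (k + 1) = (2 * k + 1) + 1 := by ring
  rw [h3, pow_succ]
  group

/-- The Björner–Brenti style involution on `W × ZMod 2` attached to a generator. -/
def tog (i : B) : Equiv.Perm (W × ZMod 2) :=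
  Function.Involutive.toPerm
    (fun p => (cs.simple i * p.1 * cs.simple i, p.2 + if p.1 = cs.simple i then 1 else 0))
    (by
      intro p
      obtain ⟨t, e⟩ := p
      have hss := cs.simple_mul_simple_self i
      have hiff : cs.simple i * t * cs.simple i = cs.simple i ↔ t = cs.simple i := by
        rw [simple_conj_eq_iff]
        simp [mul_assoc, hss]
      simp only [Prod.mk.injEq]
      constructor
      · simp [mul_assoc, hss, cs.simple_mul_simple_cancel_left]
      · rw [if_congr hiff rfl rfl]
        rcases eq_or_ne t (cs.simple i) with h | h
        · have h11 : (1 : ZMod 2) + 1 = 0 := by decide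
          rw [if_pos h, add_assoc, h11, add_zero]
        · rw [if_neg h, add_zero, add_zero])

lemma tog_apply (i : B) (t : W) (e : ZMod 2) :
    tog cs i (t, e) = (cs.simple i * t * cs.simple i, e + if t = cs.simple i then 1 else 0) :=
  rfl

/-- Closed form for the action of `(tog i * tog j)^k`. -/
lemma tog_mul_pow_apply (i j : B) (k : ℕ) (t : W) (e : ZMod 2) :
    ((tog cs i * tog cs j) ^ k) (t, e) =
      ((cs.simple i * cs.simple j) ^ k * t * (((cs.simple i * cs.simple j) ^ k)⁻¹),
        e + ∑ p ∈ Finset.range (2 * k),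
          (if t = cs.simple j * (cs.simple i * cs.simple j) ^ p then (1 : ZMod 2) else 0)) := by
  set q := cs.simple i * cs.simple j with hq
  induction k with
  | zero => simp
  | succ k ih =>
    rw [pow_succ' (tog cs i * tog cs j) k]
    have happ : ∀ x : W × ZMod 2, ((tog cs i * tog cs j) * (tog cs i * tog cs j) ^ k) x
        = (tog cs i) ((tog cs j) (((tog cs i * tog cs j) ^ k) x)) := fun x => rfl
    rw [happ, ih, tog_apply, tog_apply]
    have condA : (q ^ k * t * (q ^ k)⁻¹ = cs.simple j) ↔ t = cs.simple j * q ^ (2 * k) := by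
      rw [conj_eq_iff]
      have hcp := conj_pow_simple cs i j k
      rw [← hq] at hcp
      rw [hcp]
    have condB : (cs.simple j * (q ^ k * t * (q ^ k)⁻¹) * cs.simple j = cs.simple i)
        ↔ t = cs.simple j * q ^ (2 * k + 1) := by
      rw [simple_conj_eq_iff, conj_eq_iff]
      have hcp := conj_pow_simple' cs i j k
      rw [← hq] at hcp
      rw [hcp]
    have hfst : cs.simple i * (cs.simple j * (q ^ k * t * (q ^ k)⁻¹) * cs.simple j) * cs.simple i
        = q ^ (k+1) * t * (q ^ (k+1))⁻¹ := by
      rw [pow_succ' q k, hq]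
      simp [mul_inv_rev, cs.inv_simple, mul_assoc]
    rw [Prod.mk.injEq]
    refine ⟨hfst, ?_⟩
    have hsum : 2 * (k + 1) = 2 * k + 1 + 1 := by ring
    rw [if_congr condA rfl rfl, if_congr condB rfl rfl, hsum,
      Finset.sum_range_succ, Finset.sum_range_succ]
    ring

/-- The toggles satisfy the Coxeter relations. -/
lemma tog_liftable : M.IsLiftable (tog cs) := by
  intro i j
  apply Equiv.ext
  rintro ⟨t, e⟩
  rw [show ((tog cs i * tog cs j) ^ M i j) (t, e)
      = ((tog cs i * tog cs j) ^ M i j) (t, e) from rfl]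
  rw [tog_mul_pow_apply]
  have hpow := cs.simple_mul_simple_pow i j
  have hsum : ∑ p ∈ Finset.range (2 * M i j),
      (if t = cs.simple j * (cs.simple i * cs.simple j) ^ p then (1 : ZMod 2) else 0) = 0 := by
    rw [two_mul, Finset.sum_range_add]
    have hshift : ∀ p, (if t = cs.simple j * (cs.simple i * cs.simple j) ^ (M i j + p)
        then (1 : ZMod 2) else 0)
        = (if t = cs.simple j * (cs.simple i * cs.simple j) ^ p then (1 : ZMod 2) else 0) := by
      intro p
      have : (cs.simple i * cs.simple j) ^ (M i j + p)
          = (cs.simple i * cs.simple j) ^ p := by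
        rw [pow_add, hpow, one_mul]
      rw [this]
    rw [Finset.sum_congr rfl (fun p _ => hshift p), ← Finset.sum_add_distrib]
    have hz : ∀ x : ZMod 2, x + x = 0 := by decide
    simp [hz]
  rw [hpow, hsum]
  simp

/-- The permutation representation `W →* Perm (W × ZMod 2)`. -/
noncomputable def permRep : W →* Equiv.Perm (W × ZMod 2) :=
  cs.lift ⟨tog cs, tog_liftable cs⟩

lemma permRep_simple (i : B) : permRep cs (cs.simple i) = tog cs i :=
  cs.lift_apply_simple (tog_liftable cs) i

/-- The action of a word's product records the parity of multiplicities in the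
right inversion sequence. -/
lemma permRep_wordProd (ω : List B) (t : W) (e : ZMod 2) :
    permRep cs (cs.wordProd ω) (t, e)
      = (cs.wordProd ω * t * (cs.wordProd ω)⁻¹,
          e + (((cs.rightInvSeq ω).count t : ℕ) : ZMod 2)) := by
  induction ω generalizing e with
  | nil => simp [permRep]
  | cons i ω ih =>
    rw [cs.wordProd_cons, map_mul, permRep_simple]
    have hmul : (tog cs i * permRep cs (cs.wordProd ω)) (t, e)
        = tog cs i ((permRep cs (cs.wordProd ω)) (t, e)) := rfl
    rw [hmul, ih, tog_apply]
    have hris : cs.rightInvSeq (i :: ω)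
        = ((cs.wordProd ω)⁻¹ * cs.simple i * cs.wordProd ω) :: cs.rightInvSeq ω := rfl
    have hcond : (cs.wordProd ω * t * (cs.wordProd ω)⁻¹ = cs.simple i)
        ↔ t = (cs.wordProd ω)⁻¹ * cs.simple i * cs.wordProd ω := by
      rw [conj_eq_iff, mul_assoc, ← mul_assoc]
    rw [Prod.mk.injEq]
    constructor
    · rw [mul_inv_rev, cs.inv_simple]
      group
    · rw [hris, List.count_cons, if_congr hcond rfl rfl]
      rcases eq_or_ne t ((cs.wordProd ω)⁻¹ * cs.simple i * cs.wordProd ω) with h | h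
      · rw [if_pos h, if_pos (by simp [h])]
        push_cast
        ring
      · rw [if_neg h, if_neg (by simp [Ne.symm h])]
        push_cast
        ring

/-- Parity of multiplicity in the right inversion sequence only depends on the group element. -/
lemma count_ris_parity {ω ω' : List B} (h : cs.wordProd ω = cs.wordProd ω') (t : W) :
    (((cs.rightInvSeq ω).count t : ℕ) : ZMod 2)
      = (((cs.rightInvSeq ω').count t : ℕ) : ZMod 2) := by
  have h1 := permRep_wordProd cs ω t 0
  rw [h] at h1
  have h2 := permRep_wordProd cs ω' t 0
  have h3 := congrArg Prod.snd (h1.symm.trans h2)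
  simpa using h3

/-- For reduced words of the same element, the right inversion sequences have
the same members. -/
lemma mem_ris_iff {ω ω' : List B} (hω : cs.IsReduced ω) (hω' : cs.IsReduced ω')
    (h : cs.wordProd ω = cs.wordProd ω') (t : W) :
    t ∈ cs.rightInvSeq ω ↔ t ∈ cs.rightInvSeq ω' := by
  have hpar := count_ris_parity cs h t
  have hn := CoxeterSystem.IsReduced.nodup_rightInvSeq cs hω
  have hn' := CoxeterSystem.IsReduced.nodup_rightInvSeq cs hω'
  constructor
  · intro ht
    have h1 : (cs.rightInvSeq ω).count t = 1 :=
      le_antisymm (List.nodup_iff_count_le_one.mp hn t) (List.count_pos_iff.mpr ht)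
    rw [h1] at hpar
    by_contra hcon
    rw [List.count_eq_zero.mpr hcon] at hpar
    simp at hpar
  · intro ht
    have h1 : (cs.rightInvSeq ω').count t = 1 :=
      le_antisymm (List.nodup_iff_count_le_one.mp hn' t) (List.count_pos_iff.mpr ht)
    rw [h1] at hpar
    by_contra hcon
    rw [List.count_eq_zero.mpr hcon] at hpar
    simp at hpar

/-- The sign character attached to a letter `b` (needs the matrix to be even). -/
noncomputable def sgn (heven : ∀ i j : B, i ≠ j → Even (M i j)) (b : B) :
    W →* Multiplicative (ZMod 2) :=
  cs.lift ⟨fun c => Multiplicative.ofAdd (if c = b then 1 else 0), by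
    intro i j
    rcases eq_or_ne i j with rfl | hij
    · rw [M.diagonal i, pow_one, ← ofAdd_add]
      have hz : ∀ x : ZMod 2, x + x = 0 := by decide
      rw [hz]
      rfl
    · obtain ⟨c, hc⟩ := heven i j hij
      have h2 : ∀ g : Multiplicative (ZMod 2), g ^ 2 = 1 := by decide
      rw [hc, ← two_mul, pow_mul, h2, one_pow]⟩

lemma sgn_simple (heven : ∀ i j : B, i ≠ j → Even (M i j)) (b i : B) :
    sgn cs heven b (cs.simple i) = Multiplicative.ofAdd (if i = b then 1 else 0) :=
  cs.lift_apply_simple _ i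

/-- Letter count equals the count of inversions of the corresponding sign. -/
lemma count_eq_countP (heven : ∀ i j : B, i ≠ j → Even (M i j)) (b : B) (ω : List B) :
    ω.count b = (cs.rightInvSeq ω).countP
      (fun t => decide (sgn cs heven b t = Multiplicative.ofAdd (1 : ZMod 2))) := by
  induction ω with
  | nil => simp
  | cons i ω ih =>
    have hris : cs.rightInvSeq (i :: ω)
        = ((cs.wordProd ω)⁻¹ * cs.simple i * cs.wordProd ω) :: cs.rightInvSeq ω := rfl
    rw [hris, List.countP_cons, List.count_cons, ih]
    congr 1
    have hcomm : ∀ g h : Multiplicative (ZMod 2), g⁻¹ * h * g = h := by decide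
    have hval : sgn cs heven b ((cs.wordProd ω)⁻¹ * cs.simple i * cs.wordProd ω)
        = sgn cs heven b (cs.simple i) := by
      rw [map_mul, map_mul, map_inv, hcomm]
    rcases eq_or_ne i b with h | h
    · have hA : (i == b) = true := by simp [h]
      have hB : decide ((sgn cs heven b) ((cs.wordProd ω)⁻¹ * cs.simple i * cs.wordProd ω)
          = Multiplicative.ofAdd (1 : ZMod 2)) = true := by
        rw [decide_eq_true_eq, hval, sgn_simple, if_pos h]
      rw [if_pos hB, if_pos hA]
    · have hA : ¬ ((i == b) = true) := by simp [h]
      have hB : ¬ (decide ((sgn cs heven b) ((cs.wordProd ω)⁻¹ * cs.simple i * cs.wordProd ω)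
          = Multiplicative.ofAdd (1 : ZMod 2)) = true) := by
        rw [decide_eq_true_eq, hval, sgn_simple, if_neg h]
        decide
      rw [if_neg hB, if_neg hA]

/-- Parikh image equality for reduced words of the same element. -/
lemma parikh (heven : ∀ i j : B, i ≠ j → Even (M i j)) {ω ω' : List B}
    (hω : cs.IsReduced ω) (hω' : cs.IsReduced ω')
    (h : cs.wordProd ω = cs.wordProd ω') (b : B) :
    ω.count b = ω'.count b := by
  rw [count_eq_countP cs heven, count_eq_countP cs heven]
  set p := fun t : W => decide (sgn cs heven b t = Multiplicative.ofAdd (1 : ZMod 2)) with hp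
  rw [List.countP_eq_length_filter, List.countP_eq_length_filter]
  apply List.Perm.length_eq
  apply List.perm_of_nodup_nodup_toFinset_eq
  · exact (CoxeterSystem.IsReduced.nodup_rightInvSeq cs hω).filter p
  · exact (CoxeterSystem.IsReduced.nodup_rightInvSeq cs hω').filter p
  · ext t
    simp only [List.mem_toFinset, List.mem_filter]
    rw [mem_ris_iff cs hω hω' h]

end EvenCoxAux

/-- In an even Coxeter group, if `u, w` are geodesic words with `w·a = u` in the group,
then there is `ε ∈ {1, -1}` with `|u| = |w| + ε`, `|u|_a = |w|_a + ε`, and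
`|u|_b = |w|_b` for all letters `b ≠ a`. -/
theorem evenCoxeter_geodesic_step {S : Type*} [Fintype S] [DecidableEq S]
    (M : S → S → ℕ)
    (hsym : ∀ i j, M i j = M j i)
    (hdiag : ∀ i j, M i j = 1 ↔ i = j)
    (heven : ∀ i j, i ≠ j → Even (M i j))
    (a : S) (u w : List S)
    (hu : ∀ x : List S, coxEval M x = coxEval M u → u.length ≤ x.length)
    (hw : ∀ x : List S, coxEval M x = coxEval M w → w.length ≤ x.length)
    (hwa : coxEval M (w ++ [a]) = coxEval M u) :
    ∃ ε : ℤ, (ε = 1 ∨ ε = -1) ∧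
      (u.length : ℤ) = (w.length : ℤ) + ε ∧
      (u.count a : ℤ) = (w.count a : ℤ) + ε ∧
      ∀ b : S, b ≠ a → u.count b = w.count b := by
  classical
  -- Build the Coxeter matrix and system
  set M' : CoxeterMatrix S :=
    { M := Matrix.of fun i j => M i j
      isSymm := by ext i j; exact hsym j i
      diagonal := fun i => (hdiag i i).mpr rfl
      off_diagonal := fun i j hij h => hij ((hdiag i j).mp h) } with hM'
  have hset : coxRels M = M'.relationsSet := by
    ext r
    constructor
    · rintro ⟨i, j, rfl⟩
      exact ⟨(i, j), rfl⟩
    · rintro ⟨⟨i, j⟩, rfl⟩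
      exact ⟨i, j, rfl⟩
  let e : PresentedGroup (coxRels M) ≃* M'.Group :=
    QuotientGroup.quotientMulEquivOfEq (by rw [hset])
  let cs : CoxeterSystem M' (PresentedGroup (coxRels M)) := ⟨e⟩
  have hsimple : ∀ i : S, cs.simple i = PresentedGroup.of i := fun i => rfl
  have hcox : ∀ x : List S, coxEval M x = cs.wordProd x := by
    intro x
    induction x with
    | nil => simp [coxEval]
    | cons i x ih =>
      rw [cs.wordProd_cons, hsimple, ← ih]
      simp [coxEval]
  -- geodesics are reduced words
  have hred : ∀ (x : List S), (∀ y : List S, coxEval M y = coxEval M x → x.length ≤ y.length) →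
      cs.IsReduced x := by
    intro x hx
    obtain ⟨ω, hlen, hπ⟩ := cs.exists_reduced_word (cs.wordProd x)
    have h1 : cs.length (cs.wordProd x) ≤ x.length := cs.length_wordProd_le x
    have h2 : x.length ≤ ω.length := by
      apply hx
      rw [hcox, hcox, ← hπ]
    unfold CoxeterSystem.IsReduced
    have h3 := hlen.eq; rw [← hπ] at h3
    omega
  have hredu : cs.IsReduced u := hred u hu
  have hredw : cs.IsReduced w := hred w hw
  have hwa' : cs.wordProd (w ++ [a]) = cs.wordProd u := by
    rw [← hcox, ← hcox]; exact hwa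
  have hprod : cs.wordProd (w ++ [a]) = cs.wordProd w * cs.simple a := by
    rw [cs.wordProd_append, cs.wordProd_singleton]
  have hlu : cs.length (cs.wordProd u) = u.length := hredu
  have hlw : cs.length (cs.wordProd w) = w.length := hredw
  have hdich := cs.length_mul_simple (cs.wordProd w) a
  rw [← hprod, hwa', hlu, hlw] at hdich
  rcases hdich with hcase | hcase
  · -- u.length = w.length + 1
    have hredwa : cs.IsReduced (w ++ [a]) := by
      unfold CoxeterSystem.IsReduced
      rw [hwa', hlu, hcase]
      simp
    refine ⟨1, Or.inl rfl, ?_, ?_, ?_⟩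
    · rw [hcase]; push_cast; ring
    · have hpk := EvenCoxAux.parikh cs heven hredwa hredu hwa' a
      rw [List.count_append] at hpk
      simp only [List.count_singleton, beq_self_eq_true, if_true] at hpk
      omega
    · intro b hb
      have hpk := EvenCoxAux.parikh cs heven hredwa hredu hwa' b
      rw [List.count_append] at hpk
      have hz : List.count b [a] = 0 := List.count_eq_zero.mpr (by simp [hb])
      rw [hz, add_zero] at hpk
      exact hpk.symm
  · -- u.length + 1 = w.length
    have hswap : cs.wordProd (u ++ [a]) = cs.wordProd w := by
      rw [cs.wordProd_append, cs.wordProd_singleton]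
      have : cs.wordProd u = cs.wordProd w * cs.simple a := by
        rw [← hwa', hprod]
      rw [this, cs.simple_mul_simple_cancel_right]
    have hreduua : cs.IsReduced (u ++ [a]) := by
      unfold CoxeterSystem.IsReduced
      rw [hswap, hlw]
      simp
      omega
    refine ⟨-1, Or.inr rfl, ?_, ?_, ?_⟩
    · omega
    · have hpk := EvenCoxAux.parikh cs heven hreduua hredw hswap a
      rw [List.count_append] at hpk
      simp only [List.count_singleton, beq_self_eq_true, if_true] at hpk
      omega
    · intro b hb
      have hpk := EvenCoxAux.parikh cs heven hreduua hredw hswap b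
      rw [List.count_append] at hpk
      have : List.count b [a] = 0 := List.count_eq_zero.mpr (by simp [hb])
      rw [this, add_zero] at hpk
      exact hpk
end

section
/- For any element w of a Coxeter group G with standard geometric representation σ and any generator a, exactly one of the following holds: σ_w(a) ≥ 0 (all coordinates nonnegative) and the geodesic length satisfies |wa| = |w|+1, or σ_w(a) ≤ 0 and |wa| = |w|−1. -/
/-- The geodesic length of a group element: the least length of a word representing it. -/
noncomputable def coxLen {S : Type*} (M : S → S → ℕ) (g : PresentedGroup (coxRels M)) : ℕ :=
  sInf {n | ∃ w : List S, coxEval M w = g ∧ w.length = n}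

/-- The bilinear-form coefficients of the standard geometric representation:
`B i j = -cos (π / m_{i,j})`, with the convention `B i j = -1` when `m_{i,j} = 0` (i.e. `∞`). -/
noncomputable def coxB {S : Type*} (M : S → S → ℕ) (i j : S) : ℝ :=
  if M i j = 0 then -1 else -Real.cos (Real.pi / (M i j : ℝ))

/-- The standard geometric representation on a generator:
`σ_{a_i}(v) = v - 2 B(v, a_i) a_i`, so that `σ_{a_i}(a_j) = a_j + 2 cos(π/m_{i,j}) a_i`
(`a_j + 2 a_i` when `m_{i,j} = 0`) and `σ_{a_i}(a_i) = -a_i`. -/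
noncomputable def coxSigmaGen {S : Type*} [Fintype S] [DecidableEq S]
    (M : S → S → ℕ) (i : S) (v : S → ℝ) : S → ℝ :=
  fun b => v b - (if b = i then 2 * ∑ j : S, v j * coxB M j i else 0)

/-- The geometric representation of a word `w = a₁ ⋯ aₙ`: `σ_w = σ_{a₁} ∘ ⋯ ∘ σ_{aₙ}`. -/
noncomputable def coxSigma {S : Type*} [Fintype S] [DecidableEq S]
    (M : S → S → ℕ) (w : List S) : (S → ℝ) → (S → ℝ) :=
  w.foldr (fun i f => (coxSigmaGen M i) ∘ f) id

/-- The unit basis vector of a letter `a`. -/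
def unitVec {S : Type*} [DecidableEq S] (a : S) : S → ℝ :=
  fun b => if b = a then 1 else 0

namespace CoxAux

variable {S : Type*} (M : S → S → ℕ)

/-- The generator of the Coxeter group. -/
def gen (a : S) : PresentedGroup (coxRels M) := PresentedGroup.of a

lemma rel_eq_one (i j : S) :
    (gen M i * gen M j) ^ (M i j) = 1 := by
  have h : ((FreeGroup.of i * FreeGroup.of j) ^ (M i j)) ∈ coxRels M := ⟨i, j, rfl⟩
  have : PresentedGroup.mk (coxRels M) ((FreeGroup.of i * FreeGroup.of j) ^ (M i j)) = 1 :=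
    (QuotientGroup.eq_one_iff _).mpr (Subgroup.subset_normalClosure h)
  simpa [gen, PresentedGroup.of] using this

lemma gen_mul_self (hone : ∀ a : S, M a a = 1) (a : S) : gen M a * gen M a = 1 := by
  have := rel_eq_one M a a
  rwa [hone a, pow_one] at this

lemma gen_inv (hone : ∀ a : S, M a a = 1) (a : S) : (gen M a)⁻¹ = gen M a :=
  inv_eq_of_mul_eq_one_right (gen_mul_self M hone a)

lemma coxEval_nil : coxEval M [] = 1 := rfl

lemma coxEval_cons (a : S) (w : List S) : coxEval M (a :: w) = gen M a * coxEval M w := by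
  simp [coxEval, gen]

lemma coxEval_append (w w' : List S) :
    coxEval M (w ++ w') = coxEval M w * coxEval M w' := by
  simp [coxEval]

lemma coxEval_singleton (a : S) : coxEval M [a] = gen M a := by
  simp [coxEval, gen]

lemma coxEval_reverse (hone : ∀ a : S, M a a = 1) (w : List S) : coxEval M w.reverse = (coxEval M w)⁻¹ := by
  induction w with
  | nil => simp [coxEval_nil]
  | cons a w ih =>
    rw [List.reverse_cons, coxEval_append, ih, coxEval_singleton, coxEval_cons,
      mul_inv_rev, gen_inv M hone]

lemma exists_word (hone : ∀ a : S, M a a = 1) (g : PresentedGroup (coxRels M)) : ∃ w : List S, coxEval M w = g := by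
  let H : Subgroup (PresentedGroup (coxRels M)) :=
    { carrier := {g | ∃ w : List S, coxEval M w = g}
      one_mem' := ⟨[], rfl⟩
      mul_mem' := by
        rintro x y ⟨w, rfl⟩ ⟨w', rfl⟩
        exact ⟨w ++ w', coxEval_append M w w'⟩
      inv_mem' := by
        rintro x ⟨w, rfl⟩
        exact ⟨w.reverse, coxEval_reverse M hone w⟩ }
  exact PresentedGroup.generated_by (coxRels M) H (fun j => ⟨[j], coxEval_singleton M j⟩) g

lemma coxLen_spec (hone : ∀ a : S, M a a = 1) (g : PresentedGroup (coxRels M)) :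
    ∃ w : List S, coxEval M w = g ∧ w.length = coxLen M g := by
  have hne : {n | ∃ w : List S, coxEval M w = g ∧ w.length = n}.Nonempty := by
    obtain ⟨w, hw⟩ := exists_word M hone g
    exact ⟨w.length, w, hw, rfl⟩
  exact Nat.sInf_mem hne

lemma coxLen_le {g : PresentedGroup (coxRels M)} {w : List S} (h : coxEval M w = g) :
    coxLen M g ≤ w.length :=
  Nat.sInf_le ⟨w, h, rfl⟩

lemma coxLen_one : coxLen M 1 = 0 :=
  Nat.le_zero.mp (coxLen_le M (coxEval_nil M))

lemma eq_one_of_coxLen_eq_zero (hone : ∀ a : S, M a a = 1) {g : PresentedGroup (coxRels M)} (h : coxLen M g = 0) :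
    g = 1 := by
  obtain ⟨w, hw, hlen⟩ := coxLen_spec M hone g
  rw [h, List.length_eq_zero_iff] at hlen
  rw [← hw, hlen, coxEval_nil]

lemma coxLen_mul_gen_le (hone : ∀ a : S, M a a = 1) (g : PresentedGroup (coxRels M)) (a : S) :
    coxLen M (g * gen M a) ≤ coxLen M g + 1 := by
  obtain ⟨w, hw, hlen⟩ := coxLen_spec M hone g
  have : coxEval M (w ++ [a]) = g * gen M a := by
    rw [coxEval_append, coxEval_singleton, hw]
  simpa [hlen] using coxLen_le M this

/-- The sign/parity homomorphism. -/
noncomputable def eps : PresentedGroup (coxRels M) →* Multiplicative (ZMod 2) :=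
  PresentedGroup.toGroup (f := fun _ : S => Multiplicative.ofAdd (1 : ZMod 2)) (by
    rintro r ⟨i, j, rfl⟩
    rw [map_pow, map_mul, FreeGroup.lift_apply_of, FreeGroup.lift_apply_of, ← ofAdd_add]
    have h2 : ((1 : ZMod 2) + 1) = 0 := by decide
    rw [h2, ofAdd_zero, one_pow])

lemma eps_coxEval (w : List S) :
    eps M (coxEval M w) = Multiplicative.ofAdd (w.length : ZMod 2) := by
  induction w with
  | nil => simp [coxEval_nil]
  | cons a w ih =>
    rw [coxEval_cons, map_mul, ih]
    have : eps M (gen M a) = Multiplicative.ofAdd (1 : ZMod 2) :=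
      PresentedGroup.toGroup.of _
    rw [this, ← ofAdd_add]
    simp [add_comm]

lemma eps_eq_ofAdd_coxLen (hone : ∀ a : S, M a a = 1) (g : PresentedGroup (coxRels M)) :
    eps M g = Multiplicative.ofAdd ((coxLen M g : ZMod 2)) := by
  obtain ⟨w, hw, hlen⟩ := coxLen_spec M hone g
  rw [← hw, eps_coxEval, hlen, hw]

lemma coxLen_mul_gen_ne (hone : ∀ a : S, M a a = 1) (g : PresentedGroup (coxRels M)) (a : S) :
    coxLen M (g * gen M a) ≠ coxLen M g := by
  intro h
  have h1 := eps_eq_ofAdd_coxLen M hone (g * gen M a)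
  have h2 : eps M (g * gen M a) = eps M g * Multiplicative.ofAdd (1 : ZMod 2) := by
    have hg : eps M (gen M a) = Multiplicative.ofAdd (1 : ZMod 2) :=
      PresentedGroup.toGroup.of _
    rw [map_mul, hg]
  rw [eps_eq_ofAdd_coxLen M hone g, ← ofAdd_add] at h2
  rw [h2, h] at h1
  have h3 : ((coxLen M g : ZMod 2)) = (coxLen M g : ZMod 2) + 1 :=
    Multiplicative.ofAdd.injective h1.symm
  simpa using h3


lemma length_dichotomy (hone : ∀ a : S, M a a = 1) (g : PresentedGroup (coxRels M)) (a : S) :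
    coxLen M (g * gen M a) = coxLen M g + 1 ∨ coxLen M g = coxLen M (g * gen M a) + 1 := by
  have h1 := coxLen_mul_gen_le M hone g a
  have h2 : coxLen M g ≤ coxLen M (g * gen M a) + 1 := by
    have := coxLen_mul_gen_le M hone (g * gen M a) a
    rwa [mul_assoc, gen_mul_self M hone, mul_one] at this
  have h3 := coxLen_mul_gen_ne M hone g a
  omega

end CoxAux

namespace CoxAux

variable {S : Type*} [Fintype S] [DecidableEq S] (M : S → S → ℕ)

/-- `bv i v = B(v, α_i)`. -/
noncomputable def bv (i : S) (v : S → ℝ) : ℝ := ∑ j : S, v j * coxB M j i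

/-- The bilinear form. -/
noncomputable def Bf (u v : S → ℝ) : ℝ := ∑ j : S, u j * bv M j v

lemma coxB_symm (hsym : ∀ i j, M i j = M j i) (i j : S) : coxB M i j = coxB M j i := by
  unfold coxB; rw [hsym i j]

lemma coxB_self (hone : ∀ a : S, M a a = 1) (i : S) : coxB M i i = 1 := by
  unfold coxB
  rw [hone i]
  norm_num

lemma sigmaGen_apply (i : S) (v : S → ℝ) (b : S) :
    coxSigmaGen M i v b = v b - (if b = i then 2 * bv M i v else 0) := rfl

lemma sigmaGen_eq (i : S) (v : S → ℝ) :
    coxSigmaGen M i v = fun b => v b - (2 * bv M i v) * unitVec i b := by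
  funext b
  rw [sigmaGen_apply, unitVec]
  by_cases h : b = i <;> simp [h]

lemma bv_add (i : S) (u v : S → ℝ) :
    bv M i (fun b => u b + v b) = bv M i u + bv M i v := by
  unfold bv
  rw [← Finset.sum_add_distrib]
  congr 1; funext j; ring

lemma bv_smul (i : S) (c : ℝ) (v : S → ℝ) :
    bv M i (fun b => c * v b) = c * bv M i v := by
  unfold bv
  rw [Finset.mul_sum]
  congr 1; funext j; ring

lemma bv_sub_smul (i x : S) (c : ℝ) (v : S → ℝ) :
    bv M i (fun b => v b - c * unitVec x b) = bv M i v - c * bv M i (unitVec x) := by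
  unfold bv
  rw [Finset.mul_sum, ← Finset.sum_sub_distrib]
  congr 1; funext j; ring

lemma bv_unitVec (i j : S) : bv M i (unitVec j) = coxB M j i := by
  unfold bv unitVec
  rw [Finset.sum_eq_single j]
  · simp
  · intro k _ hk; simp [hk]
  · intro h; exact absurd (Finset.mem_univ j) h

lemma bv_unitVec_self (hone : ∀ a : S, M a a = 1) (i : S) : bv M i (unitVec i) = 1 := by
  rw [bv_unitVec, coxB_self M hone]

lemma sigmaGen_involutive (hone : ∀ a : S, M a a = 1) (i : S) (v : S → ℝ) :
    coxSigmaGen M i (coxSigmaGen M i v) = v := by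
  have hbv : bv M i (coxSigmaGen M i v) = - bv M i v := by
    rw [sigmaGen_eq]
    rw [bv_sub_smul, bv_unitVec_self M hone]
    ring
  funext b
  rw [sigmaGen_apply, hbv, sigmaGen_apply]
  by_cases h : b = i <;> simp [h] <;> ring

lemma Bf_unitVec_left (i : S) (v : S → ℝ) : Bf M (unitVec i) v = bv M i v := by
  unfold Bf unitVec
  rw [Finset.sum_eq_single i]
  · simp
  · intro k _ hk; simp [hk]
  · intro h; exact absurd (Finset.mem_univ i) h

lemma Bf_sub_smul_left (x : S) (c : ℝ) (u v : S → ℝ) :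
    Bf M (fun b => u b - c * unitVec x b) v = Bf M u v - c * bv M x v := by
  unfold Bf
  have h0 : ∀ j, (u j - c * unitVec x j) * bv M j v
      = u j * bv M j v - c * (unitVec x j * bv M j v) := by
    intro j; ring
  simp_rw [h0]
  rw [Finset.sum_sub_distrib, ← Finset.mul_sum]
  congr 2
  unfold unitVec
  rw [Finset.sum_eq_single x]
  · simp
  · intro k _ hk; simp [hk]
  · intro h; exact absurd (Finset.mem_univ x) h

lemma Bf_sub_smul_right (hsym : ∀ i j, M i j = M j i) (x : S) (c : ℝ) (u v : S → ℝ) :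
    Bf M u (fun b => v b - c * unitVec x b) = Bf M u v - c * bv M x u := by
  unfold Bf
  have h1 : ∀ j, bv M j (fun b => v b - c * unitVec x b) = bv M j v - c * coxB M x j := by
    intro j
    rw [bv_sub_smul, bv_unitVec]
  simp_rw [h1]
  have h2 : ∀ j, u j * (bv M j v - c * coxB M x j) = u j * bv M j v - c * (u j * coxB M j x) := by
    intro j
    rw [coxB_symm M hsym x j]
    ring
  simp_rw [h2]
  rw [Finset.sum_sub_distrib, ← Finset.mul_sum]
  rfl

lemma Bf_sigmaGen (hsym : ∀ i j, M i j = M j i) (hone : ∀ a : S, M a a = 1)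
    (x : S) (u v : S → ℝ) :
    Bf M (coxSigmaGen M x u) (coxSigmaGen M x v) = Bf M u v := by
  rw [sigmaGen_eq M x u, sigmaGen_eq M x v]
  rw [Bf_sub_smul_left, Bf_sub_smul_right M hsym]
  rw [bv_sub_smul, bv_unitVec_self M hone]
  ring

end CoxAux

namespace CoxAux

variable {S : Type*} [Fintype S] [DecidableEq S] (M : S → S → ℕ)

lemma coxSigma_nil (v : S → ℝ) : coxSigma M [] v = v := rfl

lemma coxSigma_cons (i : S) (w : List S) (v : S → ℝ) :
    coxSigma M (i :: w) v = coxSigmaGen M i (coxSigma M w v) := rfl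

lemma coxSigma_append (w w' : List S) (v : S → ℝ) :
    coxSigma M (w ++ w') v = coxSigma M w (coxSigma M w' v) := by
  induction w with
  | nil => rfl
  | cons a w ih => rw [List.cons_append, coxSigma_cons, coxSigma_cons, ih]

lemma Bf_coxSigma (hsym : ∀ i j, M i j = M j i) (hone : ∀ a : S, M a a = 1)
    (w : List S) (u v : S → ℝ) :
    Bf M (coxSigma M w u) (coxSigma M w v) = Bf M u v := by
  induction w with
  | nil => rfl
  | cons a w ih => rw [coxSigma_cons, coxSigma_cons, Bf_sigmaGen M hsym hone, ih]

lemma coxSigma_apply_of_not_mem (w : List S) (v : S → ℝ) {b : S} (hb : b ∉ w) :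
    coxSigma M w v b = v b := by
  induction w with
  | nil => rfl
  | cons a w ih =>
    have hba : b ≠ a := fun h => hb (h ▸ List.mem_cons_self (a := a) (l := w))
    have hbw : b ∉ w := fun h => hb (List.mem_cons_of_mem a h)
    rw [coxSigma_cons, sigmaGen_apply, if_neg hba, ih hbw, sub_zero]

/-- `σ_x(α_y) = α_y + 2 c α_x` where `c = -coxB M y x`, for `x ≠ y`. -/
lemma sigmaGen_unitVec_ne {x y : S} (h : y ≠ x) (b : S) :
    coxSigmaGen M x (unitVec y) b = unitVec y b + (-2 * coxB M y x) * unitVec x b := by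
  rw [sigmaGen_apply, bv_unitVec]
  unfold unitVec
  by_cases hb : b = x <;> simp [hb] <;> ring

lemma sigmaGen_unitVec_self (hone : ∀ a : S, M a a = 1) (x : S) (b : S) :
    coxSigmaGen M x (unitVec x) b = -unitVec x b := by
  rw [sigmaGen_apply, bv_unitVec_self M hone]
  unfold unitVec
  by_cases hb : b = x <;> simp [hb]
  norm_num

/-- Linearity of `coxSigmaGen` in the needed special form. -/
lemma sigmaGen_comb (x : S) (p q : ℝ) (u v : S → ℝ) (b : S) :
    coxSigmaGen M x (fun c => p * u c + q * v c) b
      = p * coxSigmaGen M x u b + q * coxSigmaGen M x v b := by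
  rw [sigmaGen_apply, sigmaGen_apply, sigmaGen_apply]
  have : bv M x (fun c => p * u c + q * v c) = p * bv M x u + q * bv M x v := by
    rw [bv_add, bv_smul, bv_smul]
  rw [this]
  by_cases hb : b = x <;> simp [hb] <;> ring

end CoxAux

namespace CoxAux

variable {S : Type*} [Fintype S] [DecidableEq S] (M : S → S → ℕ)

/-- `zfun s t k` is `s` for even `k` and `t` for odd `k`. -/
def zfun (s t : S) (k : ℕ) : S := if k % 2 = 0 then s else t

/-- The alternating word of length `k` over `{s, t}` ending with `t`. -/
def altWord (s t : S) : ℕ → List S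
  | 0 => []
  | k + 1 => zfun s t (k + 1) :: altWord s t k

lemma zfun_add_two (s t : S) (k : ℕ) : zfun s t (k + 2) = zfun s t k := by
  unfold zfun
  rw [Nat.add_mod_right]

lemma zfun_mem (s t : S) (k : ℕ) : zfun s t k = s ∨ zfun s t k = t := by
  unfold zfun
  by_cases h : k % 2 = 0 <;> simp [h]

lemma altWord_mem (s t : S) (k : ℕ) {b : S} (hb : b ∈ altWord s t k) : b = s ∨ b = t := by
  induction k with
  | zero => simp [altWord] at hb
  | succ k ih =>
    rw [altWord, List.mem_cons] at hb
    rcases hb with hb | hb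
    · rcases zfun_mem s t (k+1) with h | h
      · exact Or.inl (hb.trans h)
      · exact Or.inr (hb.trans h)
    · exact ih hb

/-- The coefficient recurrence: `pq c 0 = (1, 0)`,
`pq c (k+1) = (2c ⬝ p - q, p)`. -/
def pq (c : ℝ) : ℕ → ℝ × ℝ
  | 0 => (1, 0)
  | k + 1 => (2 * c * (pq c k).1 - (pq c k).2, (pq c k).1)

/-- The key identity: the action of the alternating word on `α_s`. -/
lemma altWord_sigma (hsym : ∀ i j, M i j = M j i) (hone : ∀ a : S, M a a = 1) {s t : S} (hst : s ≠ t)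
    (c : ℝ) (hc : coxB M s t = -c) (k : ℕ) (b : S) :
    coxSigma M (altWord s t k) (unitVec s) b
      = (pq c k).1 * unitVec (zfun s t k) b + (pq c k).2 * unitVec (zfun s t (k+1)) b := by
  have hc' : coxB M t s = -c := by rw [coxB_symm M hsym]; exact hc
  induction k generalizing b with
  | zero =>
    rw [altWord, coxSigma_nil]
    show unitVec s b = 1 * unitVec (zfun s t 0) b + 0 * unitVec (zfun s t 1) b
    simp [zfun]
  | succ k ih =>
    rw [altWord, coxSigma_cons]
    have hfun : coxSigma M (altWord s t k) (unitVec s)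
        = fun b => (pq c k).1 * unitVec (zfun s t k) b + (pq c k).2 * unitVec (zfun s t (k+1)) b :=
      funext ih
    rw [hfun, sigmaGen_comb]
    -- x := zfun s t (k+1) ; σ_x (unitVec (zfun s t k)) and σ_x (unitVec (zfun s t (k+1)))
    have hne : zfun s t k ≠ zfun s t (k + 1) := by
      unfold zfun
      rcases Nat.even_or_odd k with he | ho
      · have h1 : k % 2 = 0 := Nat.even_iff.mp he
        have h2 : (k+1) % 2 = 1 := by omega
        simp [h1, h2, hst]
      · have h1 : k % 2 = 1 := Nat.odd_iff.mp ho
        have h2 : (k+1) % 2 = 0 := by omega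
        simp [h1, h2, hst.symm]
    have hcB : coxB M (zfun s t k) (zfun s t (k+1)) = -c := by
      rcases zfun_mem s t k with h1 | h1 <;> rcases zfun_mem s t (k+1) with h2 | h2
      · exact absurd (h1.trans h2.symm) hne
      · rw [h1, h2]; exact hc
      · rw [h1, h2]; exact hc'
      · exact absurd (h1.trans h2.symm) hne
    have e1 : ∀ b, coxSigmaGen M (zfun s t (k+1)) (unitVec (zfun s t k)) b
        = unitVec (zfun s t k) b + (2 * c) * unitVec (zfun s t (k+1)) b := by
      intro b
      rw [sigmaGen_unitVec_ne M hne b, hcB]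
      ring
    have e2 : ∀ b, coxSigmaGen M (zfun s t (k+1)) (unitVec (zfun s t (k+1))) b
        = -unitVec (zfun s t (k+1)) b := fun b => sigmaGen_unitVec_self M hone _ b
    rw [e1, e2]
    show _ = (2 * c * (pq c k).1 - (pq c k).2) * unitVec (zfun s t (k+1)) b
        + (pq c k).1 * unitVec (zfun s t (k+1+1)) b
    rw [zfun_add_two]
    ring

end CoxAux

namespace CoxAux

lemma pq_one (k : ℕ) : pq 1 k = ((k : ℝ) + 1, (k : ℝ)) := by
  induction k with
  | zero => simp [pq]
  | succ k ih =>
    rw [pq, ih]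
    push_cast
    refine Prod.ext ?_ ?_ <;> dsimp <;> ring

lemma sin_rec (θ x : ℝ) : 2 * Real.cos θ * Real.sin (x + θ) - Real.sin x
    = Real.sin (x + 2 * θ) := by
  have e1 : Real.sin (x + θ) = Real.sin x * Real.cos θ + Real.cos x * Real.sin θ :=
    Real.sin_add x θ
  have e2 : Real.sin (x + 2 * θ) = Real.sin x * Real.cos (2 * θ) + Real.cos x * Real.sin (2 * θ) :=
    Real.sin_add x (2 * θ)
  rw [e1, e2, Real.cos_two_mul, Real.sin_two_mul]
  ring

lemma pq_cos {m : ℕ} (hm : 2 ≤ m) (k : ℕ) :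
    pq (Real.cos (Real.pi / m)) k
      = (Real.sin (((k : ℝ) + 1) * (Real.pi / m)) / Real.sin (Real.pi / m),
         Real.sin ((k : ℝ) * (Real.pi / m)) / Real.sin (Real.pi / m)) := by
  have hθpos : 0 < Real.pi / m :=
    div_pos Real.pi_pos (by exact_mod_cast Nat.lt_of_lt_of_le Nat.zero_lt_two hm)
  have hθlt : Real.pi / m < Real.pi := by
    apply div_lt_self Real.pi_pos
    exact_mod_cast Nat.lt_of_lt_of_le Nat.one_lt_two hm
  have hsin : Real.sin (Real.pi / m) ≠ 0 :=
    ne_of_gt (Real.sin_pos_of_pos_of_lt_pi hθpos hθlt)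
  induction k with
  | zero =>
    simp [pq]
    rw [div_self hsin]
  | succ k ih =>
    rw [pq, ih]
    have h1 : ((k : ℝ) + 1 + 1) * (Real.pi / m) = (k : ℝ) * (Real.pi / m) + 2 * (Real.pi / m) := by
      ring
    have h2 : ((k : ℝ) + 1) * (Real.pi / m) = (k : ℝ) * (Real.pi / m) + (Real.pi / m) := by
      ring
    refine Prod.ext ?_ ?_ <;> dsimp
    · push_cast
      rw [h1, ← sin_rec (Real.pi / m) ((k : ℝ) * (Real.pi / m)), ← h2]
      field_simp
      try ring
    · push_cast
      try rfl

end CoxAux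

namespace CoxAux

variable {S : Type*} [Fintype S] [DecidableEq S] (M : S → S → ℕ)

lemma sum_unit_mul (y : S) (f : S → ℝ) : ∑ j : S, unitVec y j * f j = f y := by
  unfold unitVec
  rw [Finset.sum_eq_single y]
  · simp
  · intro k _ hk; simp [hk]
  · intro h; exact absurd (Finset.mem_univ y) h

lemma Bf_comm (hsym : ∀ i j, M i j = M j i) (u v : S → ℝ) : Bf M u v = Bf M v u := by
  unfold Bf bv
  simp_rw [Finset.mul_sum]
  rw [Finset.sum_comm]
  congr 1; funext j; congr 1; funext k
  rw [coxB_symm M hsym k j]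
  ring

lemma bv_comb (x y z : S) (p q : ℝ) (v : S → ℝ) :
    bv M x (fun b => v b + p * unitVec y b + q * unitVec z b)
      = bv M x v + p * coxB M y x + q * coxB M z x := by
  unfold bv
  simp_rw [add_mul, Finset.sum_add_distrib]
  congr 1
  · congr 1
    simp_rw [mul_assoc]
    rw [← Finset.mul_sum, sum_unit_mul]
  · simp_rw [mul_assoc]
    rw [← Finset.mul_sum, sum_unit_mul]

/-- `coxSigmaGen` as a permutation. -/
noncomputable def sigmaPerm (hone : ∀ a : S, M a a = 1) (i : S) : Equiv.Perm (S → ℝ) where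
  toFun := coxSigmaGen M i
  invFun := coxSigmaGen M i
  left_inv := sigmaGen_involutive M hone i
  right_inv := sigmaGen_involutive M hone i

lemma sigmaPerm_apply (hone : ∀ a : S, M a a = 1) (i : S) (v : S → ℝ) :
    sigmaPerm M hone i v = coxSigmaGen M i v := rfl

lemma sigmaPerm_inv (hone : ∀ a : S, M a a = 1) (i : S) :
    (sigmaPerm M hone i)⁻¹ = sigmaPerm M hone i :=
  Equiv.ext fun _ => rfl

lemma sigmaPerm_pow_apply (hone : ∀ a : S, M a a = 1) (i j : S) (k : ℕ) (v : S → ℝ) :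
    ((sigmaPerm M hone i * sigmaPerm M hone j) ^ k) v = coxSigma M (altWord i j (2 * k)) v := by
  induction k generalizing v with
  | zero => rfl
  | succ k ih =>
    have h2 : 2 * (k + 1) = (2 * k) + 1 + 1 := by ring
    rw [h2]
    show ((sigmaPerm M hone i * sigmaPerm M hone j) ^ (k+1)) v = _
    rw [pow_succ']
    rw [altWord, altWord]
    have hz1 : zfun i j (2 * k + 1 + 1) = i := by
      unfold zfun
      have h : (2 * k + 1 + 1) % 2 = 0 := by omega
      rw [h]
      rfl
    have hz2 : zfun i j (2 * k + 1) = j := by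
      unfold zfun
      have h : (2 * k + 1) % 2 = 1 := by omega
      rw [h]
      rfl
    rw [hz1, hz2, coxSigma_cons, coxSigma_cons, ← ih v]
    simp only [Equiv.Perm.mul_apply]
    rfl

end CoxAux

namespace CoxAux

variable {S : Type*} [Fintype S] [DecidableEq S] (M : S → S → ℕ)

lemma altWord_two_m (hsym : ∀ i j, M i j = M j i) (hone : ∀ a : S, M a a = 1)
    {i j : S} (hij : i ≠ j) {m : ℕ} (hm : 2 ≤ m) (hMij : M i j = m) (b : S) :
    coxSigma M (altWord i j (2 * m)) (unitVec i) b = unitVec i b := by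
  have hc : coxB M i j = -Real.cos (Real.pi / m) := by
    unfold coxB
    rw [hMij, if_neg (by omega)]
  rw [altWord_sigma M hsym hone hij _ hc (2 * m) b, pq_cos hm]
  have hm0 : (m : ℝ) ≠ 0 := Nat.cast_ne_zero.mpr (by omega)
  have h1 : (((2 * m : ℕ) : ℝ) + 1) * (Real.pi / m) = Real.pi / m + 2 * Real.pi := by
    push_cast
    field_simp
    ring
  have h2 : ((2 * m : ℕ) : ℝ) * (Real.pi / m) = 2 * Real.pi := by
    push_cast
    field_simp
  rw [h1, h2, Real.sin_add_two_pi, Real.sin_two_pi]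
  have hθpos : 0 < Real.pi / m :=
    div_pos Real.pi_pos (by exact_mod_cast Nat.lt_of_lt_of_le Nat.zero_lt_two hm)
  have hθlt : Real.pi / m < Real.pi := by
    apply div_lt_self Real.pi_pos
    exact_mod_cast Nat.lt_of_lt_of_le Nat.one_lt_two hm
  have hsin : Real.sin (Real.pi / m) ≠ 0 :=
    ne_of_gt (Real.sin_pos_of_pos_of_lt_pi hθpos hθlt)
  have hz : zfun i j (2 * m) = i := by
    unfold zfun
    have h : (2 * m) % 2 = 0 := by omega
    rw [h]
    rfl
  rw [hz, div_self hsin]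
  dsimp
  ring

lemma sigma_rel (hsym : ∀ i j, M i j = M j i) (hone : ∀ a : S, M a a = 1)
    (hdiag : ∀ i j, M i j = 1 ↔ i = j) (i j : S) :
    (sigmaPerm M hone i * sigmaPerm M hone j) ^ (M i j) = 1 := by
  by_cases hij : i = j
  · subst hij
    rw [hone i, pow_one]
    apply Equiv.ext
    intro v
    show coxSigmaGen M i (coxSigmaGen M i v) = v
    exact sigmaGen_involutive M hone i v
  · by_cases hM0 : M i j = 0
    · rw [hM0, pow_zero]
    · have hm : 2 ≤ M i j := by
        have h1 : M i j ≠ 1 := fun h => hij ((hdiag i j).mp h)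
        omega
      set P := sigmaPerm M hone i * sigmaPerm M hone j with hP
      set Q := sigmaPerm M hone j * sigmaPerm M hone i with hQ
      have hPi : (P ^ M i j) (unitVec i) = unitVec i := by
        funext b
        rw [sigmaPerm_pow_apply]
        exact altWord_two_m M hsym hone hij hm rfl b
      have hQj : (Q ^ M i j) (unitVec j) = unitVec j := by
        funext b
        rw [sigmaPerm_pow_apply]
        exact altWord_two_m M hsym hone (Ne.symm hij) hm (hsym j i) b
      have hPinv : (P ^ M i j)⁻¹ = Q ^ M i j := by
        rw [← inv_pow, hP, mul_inv_rev, sigmaPerm_inv, sigmaPerm_inv, hQ]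
      have hPj : (P ^ M i j) (unitVec j) = unitVec j := by
        have h1 : (Q ^ M i j)⁻¹ (unitVec j) = unitVec j := by
          conv_lhs => rw [← hQj]
          exact Equiv.symm_apply_apply _ _
        rw [← hPinv, inv_inv] at h1
        exact h1
      -- now an arbitrary vector
      apply Equiv.ext
      intro v
      show (P ^ M i j) v = v
      have hwordeq : ∀ u : S → ℝ, (P ^ M i j) u = coxSigma M (altWord i j (2 * M i j)) u :=
        fun u => sigmaPerm_pow_apply M hone i j (M i j) u
      have hsupp : ∀ b : S, b ≠ i → b ≠ j → (P ^ M i j) v b = v b := by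
        intro b hbi hbj
        rw [hwordeq]
        apply coxSigma_apply_of_not_mem
        intro hmem
        rcases altWord_mem i j (2 * M i j) hmem with h | h
        · exact hbi h
        · exact hbj h
      set zi := (P ^ M i j) v i - v i with hzi
      set zj := (P ^ M i j) v j - v j with hzj
      have hform : (P ^ M i j) v = fun b => v b + zi * unitVec i b + zj * unitVec j b := by
        funext b
        by_cases hbi : b = i
        · subst hbi
          unfold unitVec
          rw [if_pos rfl, if_neg hij, hzi]
          ring
        · by_cases hbj : b = j
          · subst hbj
            unfold unitVec
            rw [if_neg (Ne.symm hij), if_pos rfl, hzj]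
            ring
          · unfold unitVec
            rw [if_neg hbi, if_neg hbj, hsupp b hbi hbj]
            ring
      have hBinv : ∀ u : S → ℝ, Bf M ((P ^ M i j) v) ((P ^ M i j) u) = Bf M v u := by
        intro u
        rw [hwordeq v, hwordeq u]
        exact Bf_coxSigma M hsym hone _ v u
      have hBi : bv M i ((P ^ M i j) v) = bv M i v := by
        have h := hBinv (unitVec i)
        rw [hPi, Bf_comm M hsym ((P ^ M i j) v) (unitVec i), Bf_comm M hsym v (unitVec i),
          Bf_unitVec_left, Bf_unitVec_left] at h
        exact h
      have hBj : bv M j ((P ^ M i j) v) = bv M j v := by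
        have h := hBinv (unitVec j)
        rw [hPj, Bf_comm M hsym ((P ^ M i j) v) (unitVec j), Bf_comm M hsym v (unitVec j),
          Bf_unitVec_left, Bf_unitVec_left] at h
        exact h
      have hc : coxB M i j = -Real.cos (Real.pi / (M i j : ℝ)) := by
        unfold coxB
        rw [if_neg hM0]
      have hcji : coxB M j i = -Real.cos (Real.pi / (M i j : ℝ)) := by
        rw [coxB_symm M hsym]
        exact hc
      have e1 : bv M i ((P ^ M i j) v)
          = bv M i v + zi * 1 + zj * (-Real.cos (Real.pi / (M i j : ℝ))) := by
        rw [hform, bv_comb, coxB_self M hone, hcji]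
      have e2 : bv M j ((P ^ M i j) v)
          = bv M j v + zi * (-Real.cos (Real.pi / (M i j : ℝ))) + zj * 1 := by
        rw [hform, bv_comb, coxB_self M hone, hc]
      set c := Real.cos (Real.pi / (M i j : ℝ)) with hcdef
      have hz1 : zi = c * zj := by
        rw [e1] at hBi
        linarith
      have hz2 : zj = c * zi := by
        rw [e2] at hBj
        linarith
      have hsinpos : 0 < Real.sin (Real.pi / (M i j : ℝ)) := by
        apply Real.sin_pos_of_pos_of_lt_pi
        · refine div_pos Real.pi_pos ?_
          exact_mod_cast (by omega : 0 < M i j)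
        · apply div_lt_self Real.pi_pos
          exact_mod_cast (by omega : 1 < M i j)
      have hc2 : c ^ 2 < 1 := by
        nlinarith [Real.sin_sq_add_cos_sq (Real.pi / (M i j : ℝ))]
      have h3 : zi * (1 - c ^ 2) = 0 := by
        have h4 := hz1
        rw [hz2] at h4
        nlinarith [h4]
      have hzi0 : zi = 0 := by
        rcases mul_eq_zero.mp h3 with h | h
        · exact h
        · nlinarith
      have hzj0 : zj = 0 := by
        rw [hz2, hzi0, mul_zero]
      rw [hform]
      funext b
      rw [hzi0, hzj0]
      ring

end CoxAux

namespace CoxAux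

variable {S : Type*} [Fintype S] [DecidableEq S] (M : S → S → ℕ)

/-- The geometric representation as a homomorphism to permutations. -/
noncomputable def rep (hsym : ∀ i j, M i j = M j i) (hone : ∀ a : S, M a a = 1)
    (hdiag : ∀ i j, M i j = 1 ↔ i = j) :
    PresentedGroup (coxRels M) →* Equiv.Perm (S → ℝ) :=
  PresentedGroup.toGroup (f := sigmaPerm M hone) (by
    rintro r ⟨i, j, rfl⟩
    rw [map_pow, map_mul, FreeGroup.lift_apply_of, FreeGroup.lift_apply_of]
    exact sigma_rel M hsym hone hdiag i j)

variable (hsym : ∀ i j, M i j = M j i) (hone : ∀ a : S, M a a = 1)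
    (hdiag : ∀ i j, M i j = 1 ↔ i = j)

lemma rep_gen (a : S) : rep M hsym hone hdiag (gen M a) = sigmaPerm M hone a :=
  PresentedGroup.toGroup.of _

lemma rep_coxEval (w : List S) (v : S → ℝ) :
    rep M hsym hone hdiag (coxEval M w) v = coxSigma M w v := by
  induction w generalizing v with
  | nil => rw [coxEval_nil, map_one]; rfl
  | cons a w ih =>
    rw [coxEval_cons, map_mul, rep_gen, coxSigma_cons, Equiv.Perm.mul_apply, ih]
    rfl

lemma coxSigma_comb (w : List S) (p q : ℝ) (u u' : S → ℝ) (b : S) :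
    coxSigma M w (fun c => p * u c + q * u' c) b
      = p * coxSigma M w u b + q * coxSigma M w u' b := by
  induction w generalizing b with
  | nil => rfl
  | cons a w ih =>
    rw [coxSigma_cons, coxSigma_cons, coxSigma_cons]
    have hfun : coxSigma M w (fun c => p * u c + q * u' c)
        = fun b => p * coxSigma M w u b + q * coxSigma M w u' b := funext ih
    rw [hfun, sigmaGen_comb]

/-- Appending `s` to the alternating word ending in `t` gives the one ending in `s`. -/
lemma altWord_concat (s t : S) (k : ℕ) :
    altWord s t k ++ [s] = altWord t s (k + 1) := by
  induction k with
  | zero => rfl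
  | succ k ih =>
    show zfun s t (k + 1) :: (altWord s t k ++ [s]) = zfun t s (k + 2) :: altWord t s (k + 1)
    rw [ih]
    congr 1
    unfold zfun
    have h : (k + 2) % 2 = k % 2 := by omega
    rw [h]
    rcases Nat.even_or_odd k with he | ho
    · have h1 : k % 2 = 0 := Nat.even_iff.mp he
      have h2 : (k + 1) % 2 = 1 := by omega
      simp [h1, h2]
    · have h1 : k % 2 = 1 := Nat.odd_iff.mp ho
      have h2 : (k + 1) % 2 = 0 := by omega
      simp [h1, h2]

/-- Decomposition: the alternating word of length `n + d` has the one of length `n` as suffix. -/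
lemma altWord_decomp (s t : S) (d n : ℕ) :
    ∃ pre : List S, altWord s t (n + d) = pre ++ altWord s t n ∧ pre.length = d := by
  induction d with
  | zero => exact ⟨[], by simp, rfl⟩
  | succ d ih =>
    obtain ⟨pre, hpre, hlen⟩ := ih
    refine ⟨zfun s t (n + d + 1) :: pre, ?_, by simp [hlen]⟩
    show zfun s t (n + d + 1) :: altWord s t (n + d) = _
    rw [hpre]
    rfl

lemma coxEval_altWord_even (s t : S) (k : ℕ) :
    coxEval M (altWord s t (2 * k)) = (gen M s * gen M t) ^ k := by
  induction k with
  | zero => rfl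
  | succ k ih =>
    have h2 : 2 * (k + 1) = 2 * k + 1 + 1 := by ring
    rw [h2]
    show coxEval M (zfun s t (2 * k + 1 + 1) :: zfun s t (2 * k + 1) :: altWord s t (2 * k)) = _
    have hz1 : zfun s t (2 * k + 1 + 1) = s := by
      unfold zfun
      have h : (2 * k + 1 + 1) % 2 = 0 := by omega
      rw [h]; rfl
    have hz2 : zfun s t (2 * k + 1) = t := by
      unfold zfun
      have h : (2 * k + 1) % 2 = 1 := by omega
      rw [h]; rfl
    rw [hz1, hz2, coxEval_cons, coxEval_cons, ih, pow_succ']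
    rw [mul_assoc]

/-- If `M s t ≠ 0` then long alternating words are not geodesic. -/
lemma exists_shorter (hsym : ∀ i j, M i j = M j i) (hone : ∀ a : S, M a a = 1) {s t : S} (hM0 : M s t ≠ 0) {jj : ℕ} (hjj : M s t < jj) :
    ∃ e : List S, e.length < jj ∧ coxEval M e = coxEval M (altWord t s jj) := by
  have hrel : coxEval M (altWord t s (2 * M s t)) = 1 := by
    rw [coxEval_altWord_even]
    have h := rel_eq_one M t s
    rw [hsym t s] at h
    exact h
  by_cases hcase : jj ≤ 2 * M s t
  · obtain ⟨pre, hpre, hlen⟩ := altWord_decomp t s (2 * M s t - jj) jj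
    have hn : jj + (2 * M s t - jj) = 2 * M s t := by omega
    rw [hn] at hpre
    have heval : coxEval M pre * coxEval M (altWord t s jj) = 1 := by
      rw [← coxEval_append, ← hpre, hrel]
    refine ⟨pre.reverse, by simp [hlen]; omega, ?_⟩
    rw [coxEval_reverse M hone]
    exact inv_eq_of_mul_eq_one_right heval
  · obtain ⟨pre, hpre, hlen⟩ := altWord_decomp t s (jj - 2 * M s t) (2 * M s t)
    have hn : 2 * M s t + (jj - 2 * M s t) = jj := by omega
    rw [hn] at hpre
    refine ⟨pre, by omega, ?_⟩
    rw [hpre, coxEval_append, hrel, mul_one]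

end CoxAux

namespace CoxAux

variable {S : Type*} [Fintype S] [DecidableEq S] (M : S → S → ℕ)

lemma alt_step (hone : ∀ a : S, M a a = 1) (y z x : S) (hx : x = y ∨ x = z) (k : ℕ) :
    ∃ k' ≤ k + 1,
      gen M x * coxEval M (altWord y z k) = coxEval M (altWord y z k')
      ∨ gen M x * coxEval M (altWord y z k) = coxEval M (altWord z y k') := by
  by_cases hxz : x = zfun y z (k + 1)
  · refine ⟨k + 1, le_refl _, Or.inl ?_⟩
    have : altWord y z (k + 1) = zfun y z (k + 1) :: altWord y z k := rfl
    rw [this, coxEval_cons, ← hxz]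
  · match k with
    | 0 =>
      have hz1 : zfun y z 1 = z := rfl
      have hxy : x = y := by
        rcases hx with h | h
        · exact h
        · exact absurd (h.trans hz1.symm) hxz
      refine ⟨1, by omega, Or.inr ?_⟩
      have h2 : altWord z y 1 = [y] := rfl
      rw [h2, coxEval_singleton, hxy]
      show gen M y * coxEval M [] = gen M y
      rw [coxEval_nil, mul_one]
    | k'' + 1 =>
      have hhead : x = zfun y z (k'' + 1) := by
        rcases Nat.even_or_odd k'' with he | ho
        · have h1 : k'' % 2 = 0 := Nat.even_iff.mp he
          have h2 : (k'' + 1) % 2 = 1 := by omega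
          have h3 : (k'' + 2) % 2 = 0 := by omega
          have hz2 : zfun y z (k'' + 2) = y := by unfold zfun; rw [h3]; rfl
          have hz1 : zfun y z (k'' + 1) = z := by unfold zfun; rw [h2]; rfl
          rw [hz1]
          rcases hx with h | h
          · exact absurd (h.trans hz2.symm) hxz
          · exact h
        · have h1 : k'' % 2 = 1 := Nat.odd_iff.mp ho
          have h2 : (k'' + 1) % 2 = 0 := by omega
          have h3 : (k'' + 2) % 2 = 1 := by omega
          have hz2 : zfun y z (k'' + 2) = z := by unfold zfun; rw [h3]; rfl
          have hz1 : zfun y z (k'' + 1) = y := by unfold zfun; rw [h2]; rfl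
          rw [hz1]
          rcases hx with h | h
          · exact h
          · exact absurd (h.trans hz2.symm) hxz
      refine ⟨k'', by omega, Or.inl ?_⟩
      have h4 : altWord y z (k'' + 1) = zfun y z (k'' + 1) :: altWord y z k'' := rfl
      rw [h4, coxEval_cons, ← hhead, ← mul_assoc, gen_mul_self M hone, one_mul]

lemma alt_reduce (hone : ∀ a : S, M a a = 1) (s t : S) (d : List S)
    (hd : ∀ x ∈ d, x = s ∨ x = t) :
    ∃ k ≤ d.length, coxEval M d = coxEval M (altWord s t k)
      ∨ coxEval M d = coxEval M (altWord t s k) := by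
  induction d with
  | nil => exact ⟨0, Nat.zero_le _, Or.inl rfl⟩
  | cons x d' ih =>
    obtain ⟨k, hk, hcase⟩ := ih (fun y hy => hd y (List.mem_cons_of_mem x hy))
    have hx := hd x (List.mem_cons_self (a := x) (l := d'))
    rcases hcase with hc | hc
    · obtain ⟨k', hk', hres⟩ := alt_step M hone s t x hx k
      refine ⟨k', by simpa using by omega, ?_⟩
      rw [coxEval_cons, hc]
      exact hres
    · obtain ⟨k', hk', hres⟩ := alt_step M hone t s x hx.symm k
      refine ⟨k', by simpa using by omega, ?_⟩
      rw [coxEval_cons, hc]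
      exact hres.symm

lemma descent (hone : ∀ a : S, M a a = 1) (s t : S) :
    ∀ n : ℕ, ∀ u : PresentedGroup (coxRels M), coxLen M u = n →
    ∃ (v : PresentedGroup (coxRels M)) (d : List S),
      (∀ x ∈ d, x = s ∨ x = t) ∧ u = v * coxEval M d ∧
      coxLen M u = coxLen M v + d.length ∧
      coxLen M (v * gen M s) = coxLen M v + 1 ∧
      coxLen M (v * gen M t) = coxLen M v + 1 := by
  intro n
  induction n using Nat.strong_induction_on with
  | _ n ih =>
    intro u hu
    rcases length_dichotomy M hone u s with hs | hs
    · rcases length_dichotomy M hone u t with ht | ht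
      · exact ⟨u, [], by simp, by rw [coxEval_nil, mul_one], by simp [coxEval_nil], hs, ht⟩
      · obtain ⟨v, d, hd, hud, hlen, hvs, hvt⟩ :=
          ih (coxLen M (u * gen M t)) (by omega) (u * gen M t) rfl
        refine ⟨v, d ++ [t], ?_, ?_, ?_, hvs, hvt⟩
        · intro x hx
          rcases List.mem_append.mp hx with h | h
          · exact hd x h
          · exact Or.inr (List.mem_singleton.mp h)
        · rw [coxEval_append, coxEval_singleton, ← mul_assoc, ← hud, mul_assoc,
            gen_mul_self M hone, mul_one]
        · rw [List.length_append]
          simp only [List.length_singleton]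
          omega
    · obtain ⟨v, d, hd, hud, hlen, hvs, hvt⟩ :=
        ih (coxLen M (u * gen M s)) (by omega) (u * gen M s) rfl
      refine ⟨v, d ++ [s], ?_, ?_, ?_, hvs, hvt⟩
      · intro x hx
        rcases List.mem_append.mp hx with h | h
        · exact hd x h
        · exact Or.inl (List.mem_singleton.mp h)
      · rw [coxEval_append, coxEval_singleton, ← mul_assoc, ← hud, mul_assoc,
          gen_mul_self M hone, mul_one]
      · rw [List.length_append]
        simp only [List.length_singleton]
        omega

lemma tits (hsym : ∀ i j, M i j = M j i) (hone : ∀ a : S, M a a = 1)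
    (hdiag : ∀ i j, M i j = 1 ↔ i = j) :
    ∀ n : ℕ, ∀ w : List S, coxLen M (coxEval M w) = n →
    ∀ s : S, coxLen M (coxEval M w * gen M s) = coxLen M (coxEval M w) + 1 →
    ∀ b : S, 0 ≤ coxSigma M w (unitVec s) b := by
  intro n
  induction n using Nat.strong_induction_on with
  | _ n ih =>
    intro w hw s hs b
    by_cases hn0 : coxLen M (coxEval M w) = 0
    · have hg : coxEval M w = 1 := eq_one_of_coxLen_eq_zero M hone hn0
      have he : coxSigma M w (unitVec s) b = unitVec s b := by
        rw [← rep_coxEval M hsym hone hdiag, hg, map_one]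
        rfl
      rw [he]
      unfold unitVec
      split <;> norm_num
    · -- find a decreasing letter t
      obtain ⟨wr, hwr, hwrlen⟩ := coxLen_spec M hone (coxEval M w)
      have hwrne : wr ≠ [] := by
        intro h
        rw [h] at hwrlen
        exact hn0 (by simpa using hwrlen.symm)
      obtain ⟨w', t, rfl⟩ : ∃ (w' : List S) (t : S), wr = w' ++ [t] := by
        rcases List.eq_nil_or_concat wr with h | ⟨L, b', h⟩
        · exact absurd h hwrne
        · exact ⟨L, b', by simpa using h⟩
      have hgt : coxEval M w' = coxEval M w * gen M t := by
        rw [← hwr, coxEval_append, coxEval_singleton, mul_assoc, gen_mul_self M hone, mul_one]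
      have hlt : coxLen M (coxEval M w * gen M t) ≤ w'.length := coxLen_le M hgt
      have hwlen : w'.length + 1 = coxLen M (coxEval M w) := by
        simpa using hwrlen
      have ht : coxLen M (coxEval M w) = coxLen M (coxEval M w * gen M t) + 1 := by
        rcases length_dichotomy M hone (coxEval M w) t with h | h
        · omega
        · exact h
      have hts : t ≠ s := by
        intro h
        rw [h] at ht
        omega
      -- descent
      obtain ⟨v, d, hd, hud, hlen, hvs, hvt⟩ :=
        descent M hone s t (coxLen M (coxEval M w)) (coxEval M w) rfl
      have hdne : d ≠ [] := by
        intro h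
        subst h
        rw [coxEval_nil, mul_one] at hud
        rw [← hud] at hvt
        omega
      have hdlen : 1 ≤ d.length := List.length_pos_iff.mpr hdne
      have hvlt : coxLen M v < coxLen M (coxEval M w) := by omega
      -- reduced word for v and the inductive hypotheses
      obtain ⟨wv, hwv, hwvlen⟩ := coxLen_spec M hone v
      have hIHs : ∀ b, 0 ≤ coxSigma M wv (unitVec s) b := by
        intro b
        exact ih (coxLen M (coxEval M wv)) (by rw [hwv]; omega) wv rfl s
          (by rw [hwv]; exact hvs) b
      have hIHt : ∀ b, 0 ≤ coxSigma M wv (unitVec t) b := by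
        intro b
        exact ih (coxLen M (coxEval M wv)) (by rw [hwv]; omega) wv rfl t
          (by rw [hwv]; exact hvt) b
      -- alternating reduction
      obtain ⟨k, hk, hcase⟩ := alt_reduce M hone s t d hd
      have hcase' : coxEval M d = coxEval M (altWord s t k) := by
        rcases hcase with h | h
        · exact h
        · match k, hk with
          | 0, _ => exact h
          | k'' + 1, hk =>
            exfalso
            obtain ⟨pre, hpre, hprelen⟩ := altWord_decomp t s k'' 1
            have h1 : 1 + k'' = k'' + 1 := by omega
            rw [h1] at hpre
            have haw1 : altWord t s 1 = [s] := rfl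
            rw [haw1] at hpre
            have heval : coxEval M w * gen M s = v * coxEval M pre := by
              rw [hud, h, mul_assoc, hpre, coxEval_append, coxEval_singleton, mul_assoc,
                gen_mul_self M hone, mul_one]
            have hle : coxLen M (coxEval M w * gen M s) ≤ coxLen M v + pre.length := by
              obtain ⟨wv2, hwv2, hwv2len⟩ := coxLen_spec M hone v
              have : coxEval M (wv2 ++ pre) = coxEval M w * gen M s := by
                rw [coxEval_append, hwv2, ← heval]
              have h2 := coxLen_le M this
              rw [List.length_append] at h2
              omega
            omega
      -- the bound k + 1 ≤ M s t (or M s t = 0)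
      have hbound : M s t = 0 ∨ k + 1 ≤ M s t := by
        by_cases hM0 : M s t = 0
        · exact Or.inl hM0
        · right
          by_contra hcon
          obtain ⟨e, helen, he⟩ := exists_shorter M hsym hone hM0 (by omega : M s t < k + 1)
          have heval : coxEval M w * gen M s = v * coxEval M e := by
            rw [hud, hcase', mul_assoc, he, ← altWord_concat, coxEval_append, coxEval_singleton]
          have hle : coxLen M (coxEval M w * gen M s) ≤ coxLen M v + e.length := by
            obtain ⟨wv2, hwv2, hwv2len⟩ := coxLen_spec M hone v
            have h2 : coxEval M (wv2 ++ e) = coxEval M w * gen M s := by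
              rw [coxEval_append, hwv2, ← heval]
            have h3 := coxLen_le M h2
            rw [List.length_append] at h3
            omega
          omega
      -- coefficients
      have hst : s ≠ t := Ne.symm hts
      set c : ℝ := if M s t = 0 then 1 else Real.cos (Real.pi / (M s t : ℝ)) with hcdef
      have hc : coxB M s t = -c := by
        unfold coxB
        rw [hcdef]
        split <;> norm_num
      have hp : 0 ≤ (pq c k).1 ∧ 0 ≤ (pq c k).2 := by
        rcases hbound with hM0 | hMk
        · rw [hcdef, if_pos hM0, pq_one]
          constructor <;> positivity
        · have hm2 : 2 ≤ M s t := by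
            have : M s t ≠ 1 := fun h => hst ((hdiag s t).mp h)
            omega
          rw [hcdef, if_neg (by omega), pq_cos hm2]
          have hθpos : 0 < Real.pi / (M s t : ℝ) :=
            div_pos Real.pi_pos (by exact_mod_cast (by omega : 0 < M s t))
          have hθlt : Real.pi / (M s t : ℝ) < Real.pi := by
            apply div_lt_self Real.pi_pos
            exact_mod_cast (by omega : 1 < M s t)
          have hsinpos : 0 < Real.sin (Real.pi / (M s t : ℝ)) :=
            Real.sin_pos_of_pos_of_lt_pi hθpos hθlt
          have hub : ∀ jj : ℕ, jj ≤ M s t → 0 ≤ Real.sin ((jj : ℝ) * (Real.pi / (M s t : ℝ))) := by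
            intro jj hjj
            apply Real.sin_nonneg_of_nonneg_of_le_pi
            · positivity
            · have h4 : (jj : ℝ) * (Real.pi / (M s t : ℝ))
                  ≤ (M s t : ℝ) * (Real.pi / (M s t : ℝ)) := by
                apply mul_le_mul_of_nonneg_right _ (le_of_lt hθpos)
                exact_mod_cast hjj
              have h5 : (M s t : ℝ) * (Real.pi / (M s t : ℝ)) = Real.pi := by
                field_simp
              linarith
          constructor
          · apply div_nonneg _ (le_of_lt hsinpos)
            have := hub (k + 1) hMk
            push_cast at this ⊢
            exact this
          · apply div_nonneg _ (le_of_lt hsinpos)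
            exact hub k (by omega)
      -- final computation
      have hfin : coxSigma M w (unitVec s) b
          = (pq c k).1 * coxSigma M wv (unitVec (zfun s t k)) b
            + (pq c k).2 * coxSigma M wv (unitVec (zfun s t (k + 1))) b := by
        rw [← rep_coxEval M hsym hone hdiag w, hud, map_mul, Equiv.Perm.mul_apply]
        have hd2 : rep M hsym hone hdiag (coxEval M d) (unitVec s)
            = fun b' => (pq c k).1 * unitVec (zfun s t k) b'
              + (pq c k).2 * unitVec (zfun s t (k + 1)) b' := by
          funext b'
          rw [hcase', rep_coxEval M hsym hone hdiag]
          exact altWord_sigma M hsym hone hst c hc k b'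
        rw [hd2, ← hwv, rep_coxEval M hsym hone hdiag]
        exact coxSigma_comb M wv _ _ _ _ b
      rw [hfin]
      have hz1 : 0 ≤ coxSigma M wv (unitVec (zfun s t k)) b := by
        rcases zfun_mem s t k with h | h <;> rw [h]
        · exact hIHs b
        · exact hIHt b
      have hz2 : 0 ≤ coxSigma M wv (unitVec (zfun s t (k + 1))) b := by
        rcases zfun_mem s t (k + 1) with h | h <;> rw [h]
        · exact hIHs b
        · exact hIHt b
      have := hp.1
      have := hp.2
      positivity

end CoxAux

/-- For every element `w` of a Coxeter group and every generator `a`, exactly one of the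
following holds: `σ_w(a) ≥ 0` coordinatewise and `|wa| = |w| + 1`, or `σ_w(a) ≤ 0`
coordinatewise and `|wa| = |w| - 1`. -/
theorem coxeter_sigma_sign_length {S : Type*} [Fintype S] [DecidableEq S]
    (M : S → S → ℕ)
    (hsym : ∀ i j, M i j = M j i)
    (hdiag : ∀ i j, M i j = 1 ↔ i = j)
    (w : List S) (a : S) :
    Xor'
      ((∀ b : S, 0 ≤ coxSigma M w (unitVec a) b) ∧
        coxLen M (coxEval M (w ++ [a])) = coxLen M (coxEval M w) + 1)
      ((∀ b : S, coxSigma M w (unitVec a) b ≤ 0) ∧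
        coxLen M (coxEval M w) = coxLen M (coxEval M (w ++ [a])) + 1) := by
  have hone : ∀ x : S, M x x = 1 := fun x => (hdiag x x).mpr rfl
  have heval : coxEval M (w ++ [a]) = coxEval M w * CoxAux.gen M a := by
    rw [CoxAux.coxEval_append, CoxAux.coxEval_singleton]
  rcases CoxAux.length_dichotomy M hone (coxEval M w) a with h | h
  · left
    refine ⟨⟨fun b => CoxAux.tits M hsym hone hdiag _ w rfl a h b, by rw [heval]; exact h⟩, ?_⟩
    rintro ⟨-, h2⟩
    rw [heval] at h2
    omega
  · right
    have h3 : coxLen M (coxEval M (w ++ [a]) * CoxAux.gen M a)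
        = coxLen M (coxEval M (w ++ [a])) + 1 := by
      rw [heval, mul_assoc, CoxAux.gen_mul_self M hone, mul_one]
      exact h
    refine ⟨⟨?_, by rw [heval]; exact h⟩, ?_⟩
    · intro b
      have h4 := CoxAux.tits M hsym hone hdiag _ (w ++ [a]) rfl a h3 b
      have h5 : coxSigma M (w ++ [a]) (unitVec a) b = - coxSigma M w (unitVec a) b := by
        rw [CoxAux.coxSigma_append]
        have h6 : coxSigma M [a] (unitVec a)
            = fun c => (-1) * unitVec a c + 0 * unitVec a c := by
          funext c
          have h7 : coxSigma M [a] (unitVec a) c = coxSigmaGen M a (unitVec a) c := rfl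
          rw [h7, CoxAux.sigmaGen_unitVec_self M hone a c]
          ring
        rw [h6, CoxAux.coxSigma_comb]
        ring
      linarith
    · rintro ⟨-, h2⟩
      rw [heval] at h2
      omega
end
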